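/- Let Z and Π be n×n real positive definite matrices. Let z be a random vector in ℝⁿ distributed according to the multivariate Gaussian measure N(0,Z), and let ξ be a random variable uniformly distributed on [0,1] and independent of z. Then P(ξ ≤ exp(−(1/2) zᵀ Π⁻¹ z)) = det(I + Z Π⁻¹)^{−1/2}. -/

import Mathlib

open MeasureTheory Matrix

/-- The multivariate Gaussian measure `N(0, Z)` on `ℝⁿ` with positive definite
covariance matrix `Z`, given by its density with respect to Lebesgue measure. -/
noncomputable def mvGaussian (n : ℕ) (Z : Matrix (Fin n) (Fin n) ℝ) :
    Measure (Fin n → ℝ) :=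
  volume.withDensity fun z => ENNReal.ofReal
    (((2 * Real.pi) ^ (n : ℝ) * Z.det) ^ (-(1 : ℝ) / 2) *
      Real.exp (-(1 / 2) * (z ⬝ᵥ Z⁻¹.mulVec z)))

lemma quad_subst {n : ℕ} (S M : Matrix (Fin n) (Fin n) ℝ) (hS : Sᵀ = S) (y : Fin n → ℝ) :
    (S.mulVec y) ⬝ᵥ (M.mulVec (S.mulVec y)) = y ⬝ᵥ ((S * M * S).mulVec y) := by
  rw [Matrix.mulVec_mulVec, Matrix.dotProduct_mulVec, Matrix.vecMul_mulVec, hS,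
    ← Matrix.dotProduct_mulVec, ← Matrix.mul_assoc]

lemma meas_quad {n : ℕ} (A : Matrix (Fin n) (Fin n) ℝ) :
    Continuous fun z : Fin n → ℝ => z ⬝ᵥ A.mulVec z := by
  simp only [dotProduct, Matrix.mulVec]
  fun_prop

open scoped MatrixOrder in
lemma lintegral_gaussian_quad {n : ℕ} {M : Matrix (Fin n) (Fin n) ℝ} (hM : M.PosDef) :
    (∫⁻ z : Fin n → ℝ, ENNReal.ofReal (Real.exp (-(1/2) * (z ⬝ᵥ M.mulVec z)))) =
      ENNReal.ofReal (Real.sqrt ((2*Real.pi)^n / M.det)) := by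
  classical
  have hMinv : (M⁻¹).PosDef := hM.inv
  set S := CFC.sqrt (M⁻¹) with hSdef
  have hSS : S * S = M⁻¹ := CFC.sqrt_mul_sqrt_self (M⁻¹) hMinv.posSemidef.nonneg
  have hSsym : Sᵀ = S := by
    have := (CFC.sqrt_nonneg (M⁻¹)).posSemidef.isHermitian
    simpa [Matrix.IsSymm] using this
  have hdetM : 0 < M.det := hM.det_pos
  have hdetS : S.det ≠ 0 := by
    intro h
    have : (M⁻¹).det = 0 := by rw [← hSS, Matrix.det_mul, h, mul_zero]
    rw [Matrix.det_nonsing_inv] at this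
    simp [Ring.inverse_eq_inv'] at this
    exact hdetM.ne' (by simpa using this)
  have hSMS : S * M * S = 1 := by
    have hMe : M = S⁻¹ * S⁻¹ := by
      rw [← Matrix.mul_inv_rev, hSS, Matrix.nonsing_inv_nonsing_inv _ (by
        simpa [Ring.inverse_eq_inv'] using hdetM.ne')]
    rw [hMe, ← Matrix.mul_assoc, Matrix.mul_nonsing_inv _ (Ne.isUnit hdetS), Matrix.one_mul,
      Matrix.nonsing_inv_mul _ (Ne.isUnit hdetS)]
  -- measure map
  have hmap := Real.map_matrix_volume_pi_eq_smul_volume_pi hdetS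
  have hgm : Measurable fun z : Fin n → ℝ =>
      ENNReal.ofReal (Real.exp (-(1/2) * (z ⬝ᵥ M.mulVec z))) :=
    (ENNReal.measurable_ofReal.comp ((Real.continuous_exp.comp
      (continuous_const.mul (meas_quad M))).measurable))
  have hfm : Measurable (Matrix.toLin' S) :=
    (LinearMap.continuous_on_pi _).measurable
  have key : (∫⁻ z : Fin n → ℝ, ENNReal.ofReal (Real.exp (-(1/2) * (z ⬝ᵥ M.mulVec z))))
      = ENNReal.ofReal |S.det| *
        ∫⁻ y : Fin n → ℝ, ENNReal.ofReal (Real.exp (-(1/2) * (y ⬝ᵥ y))) := by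
    have h1 := lintegral_map hgm hfm (μ := (volume : Measure (Fin n → ℝ)))
    rw [hmap] at h1
    rw [lintegral_smul_measure] at h1
    have h2 : ∀ y : Fin n → ℝ,
        ENNReal.ofReal (Real.exp (-(1/2) * (Matrix.toLin' S y ⬝ᵥ M.mulVec (Matrix.toLin' S y))))
          = ENNReal.ofReal (Real.exp (-(1/2) * (y ⬝ᵥ y))) := by
      intro y
      rw [Matrix.toLin'_apply, quad_subst S M hSsym, hSMS, Matrix.one_mulVec]
    simp only [h2] at h1
    rw [← h1, smul_eq_mul, ← mul_assoc, ← ENNReal.ofReal_mul (abs_nonneg _), ← abs_mul,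
      mul_inv_cancel₀ hdetS, abs_one, ENNReal.ofReal_one, one_mul]
  rw [key]
  -- compute the standard gaussian integral
  have hint : Integrable fun y : Fin n → ℝ => ∏ i, Real.exp (-(1/2) * (y i)^2) :=
    MeasureTheory.Integrable.fintype_prod (𝕜 := ℝ)
      (fun _ => integrable_exp_neg_mul_sq (by norm_num : (0:ℝ) < 1/2))
  have hprod : ∀ y : Fin n → ℝ, Real.exp (-(1/2) * (y ⬝ᵥ y))
      = ∏ i, Real.exp (-(1/2) * (y i)^2) := by
    intro y
    rw [← Real.exp_sum]
    congr 1
    rw [dotProduct, Finset.mul_sum]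
    exact Finset.sum_congr rfl fun i _ => by ring
  have hval : (∫ y : Fin n → ℝ, ∏ i, Real.exp (-(1/2) * (y i)^2))
      = Real.sqrt (2*Real.pi) ^ n := by
    rw [MeasureTheory.volume_pi]
    rw [MeasureTheory.integral_fintype_prod_eq_pow (ι := Fin n)
      (f := fun x : ℝ => Real.exp (-(1/2) * x^2))]
    rw [integral_gaussian (1/2)]
    norm_num
    ring
  have hl : (∫⁻ y : Fin n → ℝ, ENNReal.ofReal (Real.exp (-(1/2) * (y ⬝ᵥ y))))
      = ENNReal.ofReal (Real.sqrt (2*Real.pi) ^ n) := by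
    simp only [hprod]
    rw [← MeasureTheory.ofReal_integral_eq_lintegral_ofReal hint
      (Filter.Eventually.of_forall fun y => Finset.prod_nonneg fun i _ => (Real.exp_pos _).le),
      hval]
  rw [hl, ← ENNReal.ofReal_mul (abs_nonneg _)]
  congr 1
  -- |det S| * sqrt(2π)^n = sqrt((2π)^n / det M)
  have habs : |S.det| = Real.sqrt (M.det)⁻¹ := by
    have h1 : S.det * S.det = (M.det)⁻¹ := by
      rw [← Matrix.det_mul, hSS, Matrix.det_nonsing_inv, Ring.inverse_eq_inv']
    rw [← Real.sqrt_mul_self_eq_abs, h1]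
  rw [habs, show Real.sqrt (2*Real.pi) ^ n = Real.sqrt ((2*Real.pi)^n) by
    rw [Real.sqrt_eq_rpow, Real.sqrt_eq_rpow, ← Real.rpow_natCast _ n, ← Real.rpow_natCast _ n,
      ← Real.rpow_mul (by positivity), ← Real.rpow_mul (by positivity), mul_comm (1/2 : ℝ)]]
  rw [← Real.sqrt_mul (by positivity), inv_mul_eq_div]

/-- **Lemma 2(i)**: if `z ∼ N(0, Z)` and `ξ ∼ U[0,1]` are independent, then
`P(ξ ≤ exp(-½ zᵀ Π⁻¹ z)) = det(I + Z Π⁻¹)^{-1/2}`. -/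
theorem gaussian_event_trigger_prob (n : ℕ) (Z Pm : Matrix (Fin n) (Fin n) ℝ)
    (hZ : Z.PosDef) (hPm : Pm.PosDef) :
    ((mvGaussian n Z).prod (volume.restrict (Set.Icc (0 : ℝ) 1)))
      {p : (Fin n → ℝ) × ℝ | p.2 ≤ Real.exp (-(1 / 2) * (p.1 ⬝ᵥ (Pm⁻¹).mulVec p.1))}
      = ENNReal.ofReal ((1 + Z * Pm⁻¹).det ^ (-(1 : ℝ) / 2)) := by
  classical
  set f : (Fin n → ℝ) → ℝ := fun z => Real.exp (-(1 / 2) * (z ⬝ᵥ (Pm⁻¹).mulVec z)) with hf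
  have hfc : Continuous f := Real.continuous_exp.comp (continuous_const.mul (meas_quad _))
  have hSmeas : MeasurableSet {p : (Fin n → ℝ) × ℝ | p.2 ≤ f p.1} :=
    measurableSet_le measurable_snd (hfc.measurable.comp measurable_fst)
  rw [Measure.prod_apply hSmeas]
  have hsec : ∀ z : Fin n → ℝ,
      (volume.restrict (Set.Icc (0:ℝ) 1)) (Prod.mk z ⁻¹' {p : (Fin n → ℝ) × ℝ | p.2 ≤ f p.1})
        = ENNReal.ofReal (f z) := by
    intro z
    have hq : 0 ≤ z ⬝ᵥ (Pm⁻¹).mulVec z := by simpa using hPm.inv.posSemidef.dotProduct_mulVec_nonneg z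
    have hfz0 : 0 < f z := Real.exp_pos _
    have hfz1 : f z ≤ 1 := by
      rw [hf]
      simp only
      rw [Real.exp_le_one_iff]
      nlinarith
    have hpre : Prod.mk z ⁻¹' {p : (Fin n → ℝ) × ℝ | p.2 ≤ f p.1} = Set.Iic (f z) := rfl
    rw [hpre, Measure.restrict_apply measurableSet_Iic]
    have : Set.Iic (f z) ∩ Set.Icc 0 1 = Set.Icc 0 (f z) := by
      ext x
      simp only [Set.mem_inter_iff, Set.mem_Iic, Set.mem_Icc]
      constructor
      · rintro ⟨h1, h2, h3⟩; exact ⟨h2, h1⟩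
      · rintro ⟨h1, h2⟩; exact ⟨h2, h1, h2.trans hfz1⟩
    rw [this, Real.volume_Icc, sub_zero]
  simp only [hsec]
  -- lintegral over the Gaussian measure
  set C : ℝ := ((2 * Real.pi) ^ (n : ℝ) * Z.det) ^ (-(1 : ℝ) / 2) with hC
  have hCpos : 0 < C := by
    apply Real.rpow_pos_of_pos
    have := hZ.det_pos
    positivity
  have hdenm : Measurable fun z : Fin n → ℝ =>
      ENNReal.ofReal (C * Real.exp (-(1 / 2) * (z ⬝ᵥ Z⁻¹.mulVec z))) :=
    ENNReal.measurable_ofReal.comp (continuous_const.mul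
      (Real.continuous_exp.comp (continuous_const.mul (meas_quad _)))).measurable
  have hfm : Measurable fun z : Fin n → ℝ => ENNReal.ofReal (f z) :=
    ENNReal.measurable_ofReal.comp hfc.measurable
  rw [mvGaussian, lintegral_withDensity_eq_lintegral_mul _ hdenm hfm]
  set M : Matrix (Fin n) (Fin n) ℝ := Z⁻¹ + Pm⁻¹ with hMdef
  have hMpd : M.PosDef := hZ.inv.add hPm.inv
  have hpt : ∀ z : Fin n → ℝ,
      ENNReal.ofReal (C * Real.exp (-(1 / 2) * (z ⬝ᵥ Z⁻¹.mulVec z))) * ENNReal.ofReal (f z)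
        = ENNReal.ofReal C * ENNReal.ofReal (Real.exp (-(1/2) * (z ⬝ᵥ M.mulVec z))) := by
    intro z
    rw [ENNReal.ofReal_mul hCpos.le, mul_assoc, ← ENNReal.ofReal_mul (Real.exp_pos _).le]
    congr 1
    rw [hf, ← Real.exp_add]
    congr 1
    rw [hMdef, Matrix.add_mulVec, dotProduct_add]
    ring
  simp only [Pi.mul_apply, hpt]
  have hm2 : Measurable fun z : Fin n → ℝ =>
      ENNReal.ofReal (Real.exp (-(1/2) * (z ⬝ᵥ M.mulVec z))) :=
    ENNReal.measurable_ofReal.comp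
      (Real.continuous_exp.comp (continuous_const.mul (meas_quad _))).measurable
  rw [lintegral_const_mul _ hm2]
  rw [lintegral_gaussian_quad hMpd, ← ENNReal.ofReal_mul hCpos.le]
  congr 1
  -- real arithmetic
  have hdet1 : (1 + Z * Pm⁻¹).det = Z.det * M.det := by
    have h1 : 1 + Z * Pm⁻¹ = Z * M := by
      rw [hMdef, Matrix.mul_add, Matrix.mul_nonsing_inv _ hZ.det_pos.ne'.isUnit]
    rw [h1, Matrix.det_mul]
  rw [hdet1, hC, Real.rpow_natCast _ n]
  set a : ℝ := (2 * Real.pi) ^ n with ha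
  have hapos : (0:ℝ) < a := by positivity
  have hbpos := hZ.det_pos
  have hcpos := hMpd.det_pos
  rw [Real.sqrt_eq_rpow, neg_div, Real.rpow_neg (by positivity), Real.rpow_neg (by positivity),
    Real.mul_rpow hapos.le hbpos.le, Real.div_rpow hapos.le hcpos.le,
    Real.mul_rpow hbpos.le hcpos.le]
  have h2 : (0:ℝ) < a ^ ((1:ℝ)/2) := Real.rpow_pos_of_pos hapos _
  have h3 : (0:ℝ) < Z.det ^ ((1:ℝ)/2) := Real.rpow_pos_of_pos hbpos _
  have h4 : (0:ℝ) < M.det ^ ((1:ℝ)/2) := Real.rpow_pos_of_pos hcpos _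
  field_simp
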